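/- Let p be a prime, f : ℤ_p → ℤ_p a 1-Lipschitz function, k ≥ 0 an integer, m an integer with 0 ≤ m < p^k, and h the section of f at the vertex (k, m). Then for every integer n ≥ p the reduced van der Put coefficients satisfy b^h_n = b^f_{m + n·p^k}. -/

import Mathlib

/-- The van der Put coefficients of `f : ℤ_p → ℤ_p`:
`B^f_n = f(n)` for `0 ≤ n < p` and `B^f_n = f(n) - f(n mod p^⌊log_p n⌋)` for `n ≥ p`. -/
noncomputable def vdpB (p : ℕ) [Fact p.Prime] (f : PadicInt p → PadicInt p) (n : ℕ) :
    PadicInt p :=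
  if n < p then f n else f n - f ((n % p ^ Nat.log p n : ℕ))

/-- If `h` is the section of a 1-Lipschitz `f : ℤ_p → ℤ_p` at a vertex `(k, m)` with
`0 ≤ m < p^k`, then the reduced van der Put coefficients satisfy
`b^h_n = b^f_{m + n·p^k}` for every `n ≥ p`. -/
theorem reduced_vanDerPut_of_section (p : ℕ) [Fact p.Prime]
    (f h : PadicInt p → PadicInt p)
    (hf : ∀ x y : PadicInt p, ‖f x - f y‖ ≤ ‖x - y‖)
    (k m : ℕ) (hm : m < p ^ k)
    -- `h` is the section of `f` at the vertex `(k, m)`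
    (hsec : ∃ r : ℕ, r < p ^ k ∧ ∀ y : PadicInt p,
      f ((m : PadicInt p) + (p : PadicInt p) ^ k * y)
        = (r : PadicInt p) + (p : PadicInt p) ^ k * h y)
    -- reduced van der Put coefficients of `f` and of `h`
    (bf bh : ℕ → PadicInt p)
    (hbf : ∀ n : ℕ, (p : PadicInt p) ^ Nat.log p n * bf n = vdpB p f n)
    (hbh : ∀ n : ℕ, (p : PadicInt p) ^ Nat.log p n * bh n = vdpB p h n) :
    ∀ n : ℕ, p ≤ n → bh n = bf (m + n * p ^ k) := by
  obtain ⟨r, hr, hsec⟩ := hsec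
  intro n hn
  have hp1 : 1 < p := (Fact.out : p.Prime).one_lt
  have hn0 : n ≠ 0 := by omega
  set L := Nat.log p n with hL
  have h1 : p ^ L ≤ n := Nat.pow_log_le_self p hn0
  have h2 : n < p ^ (L + 1) := Nat.lt_pow_succ_log_self hp1 n
  have hpk : 1 ≤ p ^ k := Nat.one_le_pow _ _ (by omega)
  have hlogN : Nat.log p (m + n * p ^ k) = L + k := by
    apply Nat.log_eq_of_pow_le_of_lt_pow
    · calc p ^ (L + k) = p ^ L * p ^ k := pow_add ..
        _ ≤ n * p ^ k := by gcongr
        _ ≤ m + n * p ^ k := Nat.le_add_left _ _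
    · calc m + n * p ^ k < p ^ k + n * p ^ k := by omega
        _ = (1 + n) * p ^ k := by ring
        _ ≤ p ^ (L + 1) * p ^ k := by gcongr; omega
        _ = p ^ (L + k + 1) := by rw [← pow_add]; ring_nf
  set s := n % p ^ L with hs
  have hslt : s < p ^ L := Nat.mod_lt _ (Nat.pow_pos (by omega))
  have hmod : (m + n * p ^ k) % p ^ (L + k) = m + s * p ^ k := by
    have hdecomp : m + n * p ^ k = m + s * p ^ k + (n / p ^ L) * (p ^ L * p ^ k) := by
      have hq : n * p ^ k = s * p ^ k + (n / p ^ L) * (p ^ L * p ^ k) := by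
        calc n * p ^ k = (p ^ L * (n / p ^ L) + n % p ^ L) * p ^ k := by
              rw [Nat.div_add_mod]
          _ = _ := by rw [← hs]; ring
      omega
    rw [hdecomp, pow_add, Nat.add_mul_mod_self_right, Nat.mod_eq_of_lt]
    calc m + s * p ^ k < p ^ k + s * p ^ k := by omega
      _ = (1 + s) * p ^ k := by ring
      _ ≤ p ^ L * p ^ k := by gcongr; omega
  have hnp : ¬ n < p := by omega
  have hNp : ¬ m + n * p ^ k < p := by nlinarith
  -- compute vdpB f N
  have e1 : ((m + n * p ^ k : ℕ) : PadicInt p) = (m : PadicInt p) + (p : PadicInt p) ^ k * n := by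
    push_cast; ring
  have e2 : (((m + n * p ^ k) % p ^ (L + k) : ℕ) : PadicInt p)
      = (m : PadicInt p) + (p : PadicInt p) ^ k * (s : ℕ) := by
    rw [hmod]; push_cast; ring
  have hBf : vdpB p f (m + n * p ^ k)
      = (p : PadicInt p) ^ k * (h n - h (s : ℕ)) := by
    rw [vdpB, if_neg hNp, hlogN, e1, e2, hsec, hsec]
    ring
  have hBh : vdpB p h n = h n - h (s : ℕ) := by
    rw [vdpB, if_neg hnp, ← hL, ← hs]
  have key : (p : PadicInt p) ^ (L + k) * bf (m + n * p ^ k)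
      = (p : PadicInt p) ^ (L + k) * bh n := by
    have hf' := hbf (m + n * p ^ k)
    rw [hlogN] at hf'
    rw [hf', hBf]
    have hh' := hbh n
    rw [← hL, hBh] at hh'
    rw [← hh', pow_add]
    ring
  have hpne : ((p : PadicInt p) ^ (L + k)) ≠ 0 := by
    apply pow_ne_zero
    exact_mod_cast (Nat.cast_ne_zero (R := PadicInt p)).mpr (by omega)
  exact (mul_left_cancel₀ hpne key).symm
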